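/- Every ω-language recognized by a deterministic reachability Parikh automaton is recognized by a deterministic reachability-regular Parikh automaton, and the inclusion is strict: {aⁿbⁿa^ω | n > 0} is deterministic reachability-regular PA recognizable but not deterministic reachability PA recognizable. -/

import Mathlib

/-! Common definitions: semi-linear sets, Parikh automata on finite and infinite words. -/

/-- The linear set with base vector `b` and finite set `P` of period vectors. -/
def LinSet {d : ℕ} {M : Type} [AddCommMonoid M] (b : Fin d → M)
    (P : Finset (Fin d → M)) : Set (Fin d → M) :=
  {v | ∃ z : (Fin d → M) → ℕ, v = b + ∑ p ∈ P, z p • p}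

/-- A set is semi-linear if it is a finite union of linear sets. -/
def SemiLin {d : ℕ} {M : Type} [AddCommMonoid M] (S : Set (Fin d → M)) : Prop :=
  ∃ (n : ℕ) (b : Fin n → Fin d → M) (P : Fin n → Finset (Fin d → M)),
    S = ⋃ i, LinSet (b i) (P i)

/-- The length-`n` prefix of an infinite word. -/
def pref {S : Type} (α : ℕ → S) (n : ℕ) : List S := List.ofFn fun i : Fin n => α i.1

/-- An infinite word is ultimately periodic if it has the form `u v^ω`. -/
def UltimatelyPeriodic {S : Type} (α : ℕ → S) : Prop :=
  ∃ n p, 0 < p ∧ ∀ i, n ≤ i → α (i + p) = α i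

/-- The finite infix `α[m+1 : n]` (0-indexed positions `m, …, n-1`). -/
def infixSeg {S : Type} (α : ℕ → S) (m n : ℕ) : List S :=
  List.ofFn fun j : Fin (n - m) => α (m + j.1)

/-- `W^ω`: infinite concatenations of non-empty words from `W`. -/
def omegaPow {S : Type} (W : Set (List S)) : Set (ℕ → S) :=
  {α | ∃ k : ℕ → ℕ, k 0 = 0 ∧ StrictMono k ∧ ∀ i, infixSeg α (k i) (k (i + 1)) ∈ W}

/-- A deterministic Parikh automaton with states `Q`, alphabet `S`, dimension `d`,
and a constraint set `C` of vectors over `M` (`M = ℕ`, or `M = ℕ∞` for limit PA). -/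
structure DetPA (Q S : Type) (d : ℕ) (M : Type) where
  init : Q
  trans : Q → S → (Fin d → ℕ) × Q
  acc : Q → Prop
  C : Set (Fin d → M)

namespace DetPA

variable {Q S M : Type} {d : ℕ}

/-- The run of `A` from state `p` on the infinite word `α`: state after `i` letters. -/
def run (A : DetPA Q S d M) (p : Q) (α : ℕ → S) : ℕ → Q
  | 0 => p
  | i + 1 => (A.trans (A.run p α i) (α i)).2

/-- The state of the unique run of `A` on `α` after `i` letters. -/
def stateAt (A : DetPA Q S d M) (α : ℕ → S) : ℕ → Q := A.run A.init α

/-- The vector of the `i`-th transition of the unique run of `A` on `α`. -/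
def step (A : DetPA Q S d M) (α : ℕ → S) (i : ℕ) : Fin d → ℕ :=
  (A.trans (A.stateAt α i) (α i)).1

/-- Sum of transition vectors of the run of `A` on `α` on positions `m, …, n-1`. -/
def vecSum (A : DetPA Q S d M) (α : ℕ → S) (m n : ℕ) : Fin d → ℕ :=
  ∑ i ∈ Finset.Ico m n, A.step α i

/-- The state reached when reading a finite word from state `p`. -/
def runList (A : DetPA Q S d M) : Q → List S → Q
  | p, [] => p
  | p, a :: w => A.runList (A.trans p a).2 w

/-- The sum of transition vectors collected when reading a finite word from state `p`. -/
def sumList (A : DetPA Q S d M) : Q → List S → (Fin d → ℕ)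
  | _, [] => 0
  | p, a :: w => (A.trans p a).1 + A.sumList (A.trans p a).2 w

/-- Finite-word acceptance: end in an accepting state with vector sum in `C`. -/
def AcceptsWord (A : DetPA Q S d ℕ) (w : List S) : Prop :=
  A.acc (A.runList A.init w) ∧ A.sumList A.init w ∈ A.C

/-- The run visits accepting states infinitely often. -/
def InfAcc (A : DetPA Q S d M) (α : ℕ → S) : Prop :=
  ∀ n, ∃ i, n ≤ i ∧ A.acc (A.stateAt α i)

/-- Reachability condition. -/
def ReachAccept (A : DetPA Q S d ℕ) (α : ℕ → S) : Prop :=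
  ∃ i, 1 ≤ i ∧ A.acc (A.stateAt α i) ∧ A.vecSum α 0 i ∈ A.C

/-- Reachability-regular condition. -/
def ReachRegAccept (A : DetPA Q S d ℕ) (α : ℕ → S) : Prop :=
  A.ReachAccept α ∧ A.InfAcc α

/-- Büchi condition. -/
def BuchiAccept (A : DetPA Q S d ℕ) (α : ℕ → S) : Prop :=
  ∀ n, ∃ i, n ≤ i ∧ 1 ≤ i ∧ A.acc (A.stateAt α i) ∧ A.vecSum α 0 i ∈ A.C

/-- Weak reset condition. -/
def WeakResetAccept (A : DetPA Q S d ℕ) (α : ℕ → S) : Prop :=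
  ∃ k : ℕ → ℕ, k 0 = 0 ∧ StrictMono k ∧
    (∀ i, A.acc (A.stateAt α (k (i + 1)))) ∧
    (∀ i, A.vecSum α (k i) (k (i + 1)) ∈ A.C)

/-- Strong reset condition: accepting states occur infinitely often, and between any
two consecutive accepting positions (and from position `0` to the first one) the
collected vector lies in `C`. -/
def StrongResetAccept (A : DetPA Q S d ℕ) (α : ℕ → S) : Prop :=
  (∀ n, ∃ i, n ≤ i ∧ 1 ≤ i ∧ A.acc (A.stateAt α i)) ∧
  ∀ m n, m < n → (m = 0 ∨ (1 ≤ m ∧ A.acc (A.stateAt α m))) →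
    A.acc (A.stateAt α n) →
    (∀ j, m < j → j < n → ¬ A.acc (A.stateAt α j)) →
    A.vecSum α m n ∈ A.C

/-- The extended Parikh image of the unique run of `A` on `α`: componentwise the
supremum in `ℕ∞` of the partial sums (`∞` iff the component is incremented
infinitely often, else the finite total sum). -/
noncomputable def limImage (A : DetPA Q S d M) (α : ℕ → S) : Fin d → ℕ∞ :=
  fun j => ⨆ n, (A.vecSum α 0 n j : ℕ∞)

/-- Limit condition. -/
def LimitAccept (A : DetPA Q S d ℕ∞) (α : ℕ → S) : Prop :=
  A.InfAcc α ∧ A.limImage α ∈ A.C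

end DetPA

/-- `U` is recognized by a deterministic finite-word Parikh automaton. -/
def DetPARecogFin {S : Type} (U : Set (List S)) : Prop :=
  ∃ (d : ℕ) (Q : Type) (_ : Finite Q) (A : DetPA Q S d ℕ),
    SemiLin A.C ∧ U = {w | A.AcceptsWord w}

/-- `L` is recognized by a deterministic reachability PA. -/
def DetReachRecog {S : Type} (L : Set (ℕ → S)) : Prop :=
  ∃ (d : ℕ) (Q : Type) (_ : Finite Q) (A : DetPA Q S d ℕ),
    SemiLin A.C ∧ L = {α | A.ReachAccept α}

/-- `L` is recognized by a deterministic reachability-regular PA. -/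
def DetReachRegRecog {S : Type} (L : Set (ℕ → S)) : Prop :=
  ∃ (d : ℕ) (Q : Type) (_ : Finite Q) (A : DetPA Q S d ℕ),
    SemiLin A.C ∧ L = {α | A.ReachRegAccept α}

/-- `L` is recognized by a deterministic Büchi PA. -/
def DetBuchiRecog {S : Type} (L : Set (ℕ → S)) : Prop :=
  ∃ (d : ℕ) (Q : Type) (_ : Finite Q) (A : DetPA Q S d ℕ),
    SemiLin A.C ∧ L = {α | A.BuchiAccept α}

/-- `L` is recognized by a deterministic weak reset PA. -/
def DetWeakResetRecog {S : Type} (L : Set (ℕ → S)) : Prop :=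
  ∃ (d : ℕ) (Q : Type) (_ : Finite Q) (A : DetPA Q S d ℕ),
    SemiLin A.C ∧ L = {α | A.WeakResetAccept α}

/-- `L` is recognized by a deterministic strong reset PA. -/
def DetStrongResetRecog {S : Type} (L : Set (ℕ → S)) : Prop :=
  ∃ (d : ℕ) (Q : Type) (_ : Finite Q) (A : DetPA Q S d ℕ),
    SemiLin A.C ∧ L = {α | A.StrongResetAccept α}

/-- `L` is recognized by a deterministic limit PA (constraint set over `ℕ∞`). -/
def DetLimitRecog {S : Type} (L : Set (ℕ → S)) : Prop :=
  ∃ (d : ℕ) (Q : Type) (_ : Finite Q) (A : DetPA Q S d ℕ∞),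
    SemiLin A.C ∧ L = {α | A.LimitAccept α}

/-- A nondeterministic Parikh automaton. -/
structure NPA (Q S : Type) (d : ℕ) where
  init : Q
  trans : Q → S → (Fin d → ℕ) → Q → Prop
  acc : Q → Prop
  C : Set (Fin d → ℕ)

namespace NPA

variable {Q S : Type} {d : ℕ}

/-- `r, v` form a run of `A` on the infinite word `α`. -/
def IsRun (A : NPA Q S d) (α : ℕ → S) (r : ℕ → Q) (v : ℕ → Fin d → ℕ) : Prop :=
  r 0 = A.init ∧ ∀ i, A.trans (r i) (α i) (v i) (r (i + 1))

/-- Partial sums of the vectors of a run over positions `m, …, n-1`. -/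
def partSum (v : ℕ → Fin d → ℕ) (m n : ℕ) : Fin d → ℕ := ∑ i ∈ Finset.Ico m n, v i

/-- Nondeterministic reachability-regular acceptance. -/
def ReachRegAccept (A : NPA Q S d) (α : ℕ → S) : Prop :=
  ∃ r v, A.IsRun α r v ∧ (∃ i, 1 ≤ i ∧ A.acc (r i) ∧ partSum v 0 i ∈ A.C) ∧
    ∀ n, ∃ i, n ≤ i ∧ A.acc (r i)

/-- Nondeterministic strong reset acceptance. -/
def StrongResetAccept (A : NPA Q S d) (α : ℕ → S) : Prop :=
  ∃ r v, A.IsRun α r v ∧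
    (∀ n, ∃ i, n ≤ i ∧ 1 ≤ i ∧ A.acc (r i)) ∧
    ∀ m n, m < n → (m = 0 ∨ (1 ≤ m ∧ A.acc (r m))) → A.acc (r n) →
      (∀ j, m < j → j < n → ¬ A.acc (r j)) → partSum v m n ∈ A.C

/-- Nondeterministic weak reset acceptance. -/
def WeakResetAccept (A : NPA Q S d) (α : ℕ → S) : Prop :=
  ∃ r v, A.IsRun α r v ∧ ∃ k : ℕ → ℕ, k 0 = 0 ∧ StrictMono k ∧
    (∀ i, A.acc (r (k (i + 1)))) ∧ (∀ i, partSum v (k i) (k (i + 1)) ∈ A.C)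

/-- Runs of a nondeterministic PA on a finite word, from state `p` to state `q`
collecting vector sum `v`. -/
def ListRun (A : NPA Q S d) : Q → List S → (Fin d → ℕ) → Q → Prop
  | p, [], v, q => q = p ∧ v = 0
  | p, a :: w, v, q => ∃ u p', A.trans p a u p' ∧ ∃ v', A.ListRun p' w v' q ∧ v = u + v'

/-- Finite-word acceptance for a nondeterministic PA. -/
def AcceptsWord (A : NPA Q S d) (w : List S) : Prop :=
  ∃ v q, A.ListRun A.init w v q ∧ A.acc q ∧ v ∈ A.C

end NPA

/-- `L` is recognized by a (nondeterministic) reachability-regular PA. -/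
def NPAReachRegRecog {S : Type} (L : Set (ℕ → S)) : Prop :=
  ∃ (d : ℕ) (Q : Type) (_ : Finite Q) (A : NPA Q S d),
    SemiLin A.C ∧ L = {α | A.ReachRegAccept α}

/-- `L` is recognized by a (nondeterministic) strong reset PA. -/
def NPAStrongResetRecog {S : Type} (L : Set (ℕ → S)) : Prop :=
  ∃ (d : ℕ) (Q : Type) (_ : Finite Q) (A : NPA Q S d),
    SemiLin A.C ∧ L = {α | A.StrongResetAccept α}

/-- `L` is recognized by a (nondeterministic) weak reset PA. -/
def NPAWeakResetRecog {S : Type} (L : Set (ℕ → S)) : Prop :=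
  ∃ (d : ℕ) (Q : Type) (_ : Finite Q) (A : NPA Q S d),
    SemiLin A.C ∧ L = {α | A.WeakResetAccept α}

/-- A nondeterministic Büchi automaton. -/
structure NBA (Q S : Type) where
  init : Q
  trans : Q → S → Q → Prop
  acc : Q → Prop

/-- Büchi acceptance. -/
def NBA.Accepts {Q S : Type} (B : NBA Q S) (α : ℕ → S) : Prop :=
  ∃ r : ℕ → Q, r 0 = B.init ∧ (∀ i, B.trans (r i) (α i) (r (i + 1))) ∧
    ∀ n, ∃ i, n ≤ i ∧ B.acc (r i)

/-- `L` is ω-regular: recognized by a nondeterministic Büchi automaton. -/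
def OmegaRegular {S : Type} (L : Set (ℕ → S)) : Prop :=
  ∃ (Q : Type) (_ : Finite Q) (B : NBA Q S), L = {α | B.Accepts α}

/-- The ω-language `{aⁿbⁿa^ω | n > 0}` over `{a,b} = Bool` (`a := true`, `b := false`). -/
def Lanbnaw : Set (ℕ → Bool) :=
  {α | ∃ n, 0 < n ∧ ∀ i, α i = if i < n then true else if i < 2 * n then false else true}


open Finset in
lemma linSet_snoc {d : ℕ} {r : ℕ} (hr : r < 3) (b : Fin d → ℕ) (P : Finset (Fin d → ℕ))
    (w : Fin (d + 1) → ℕ) :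
    w ∈ LinSet (Fin.snoc b r) (insert (Fin.snoc (0 : Fin d → ℕ) 3)
        (P.image (fun p => Fin.snoc p 0))) ↔
      (fun j => w j.castSucc) ∈ LinSet b P ∧ w (Fin.last d) % 3 = r := by
  set c3 : Fin (d+1) → ℕ := Fin.snoc (0 : Fin d → ℕ) 3 with hc3def
  have hc3 : c3 ∉ P.image (fun p => Fin.snoc p 0) := by
    simp only [Finset.mem_image, not_exists]
    rintro p ⟨-, h⟩
    have := congrFun h (Fin.last d)
    simp [Fin.snoc_last, hc3def] at this
  have hinj : ∀ p ∈ P, ∀ q ∈ P, (Fin.snoc p 0 : Fin (d+1) → ℕ) = Fin.snoc q 0 → p = q := by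
    intro p _ q _ h
    funext j
    have := congrFun h (Fin.castSucc j)
    simpa [Fin.snoc_castSucc] using this
  have hne : ∀ p : Fin d → ℕ, (Fin.snoc p 0 : Fin (d+1) → ℕ) ≠ c3 := by
    intro p h
    have := congrFun h (Fin.last d)
    simp [Fin.snoc_last, hc3def] at this
  constructor
  · rintro ⟨Z, hZ⟩
    rw [Finset.sum_insert hc3, Finset.sum_image hinj] at hZ
    constructor
    · refine ⟨fun p => Z (Fin.snoc p 0), ?_⟩
      funext j
      have := congrFun hZ (Fin.castSucc j)
      simpa [Fin.snoc_castSucc, hc3def, Finset.sum_apply] using this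
    · have := congrFun hZ (Fin.last d)
      simp [Fin.snoc_last, hc3def, Finset.sum_apply] at this
      omega
  · rintro ⟨⟨z, hz⟩, hmod⟩
    refine ⟨fun q => if q = c3 then w (Fin.last d) / 3
      else z (fun j => q j.castSucc), ?_⟩
    rw [Finset.sum_insert hc3, Finset.sum_image hinj]
    simp only [if_pos rfl]
    funext x
    refine Fin.lastCases ?_ ?_ x
    · have h3 : c3 (Fin.last d) = 3 := by simp [hc3def, Fin.snoc_last]
      simp only [Pi.add_apply, Fin.snoc_last, Pi.smul_apply, smul_eq_mul, Finset.sum_apply,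
        mul_zero, Finset.sum_const_zero, add_zero, if_true, eq_self_iff_true, h3]
      omega
    · intro j
      have hcs : c3 (Fin.castSucc j) = 0 := by simp [hc3def, Fin.snoc_castSucc]
      simp only [Pi.add_apply, Fin.snoc_castSucc, Pi.smul_apply, smul_eq_mul,
        Finset.sum_apply, hcs, mul_zero, add_zero, zero_add]
      have := congrFun hz j
      simp only [Pi.add_apply, Finset.sum_apply, Pi.smul_apply, smul_eq_mul] at this
      rw [this]
      congr 1
      refine Finset.sum_congr rfl fun p _ => ?_
      rw [if_neg (hne p)]

lemma semiLin_snoc_mod3 {d : ℕ} {C : Set (Fin d → ℕ)} (hC : SemiLin C) (r : ℕ) (hr : r < 3) :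
    SemiLin {w : Fin (d + 1) → ℕ | (fun j => w j.castSucc) ∈ C ∧ w (Fin.last d) % 3 = r} := by
  obtain ⟨n, b, P, hCu⟩ := hC
  refine ⟨n, fun i => Fin.snoc (b i) r,
    fun i => insert (Fin.snoc (0 : Fin d → ℕ) 3) ((P i).image (fun p => Fin.snoc p 0)), ?_⟩
  ext w
  simp only [Set.mem_setOf_eq, hCu, Set.mem_iUnion, linSet_snoc hr]
  constructor
  · rintro ⟨⟨i, hi⟩, hm⟩; exact ⟨i, hi, hm⟩
  · rintro ⟨i, hi, hm⟩; exact ⟨⟨i, hi⟩, hm⟩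

section Part1
open Classical in
theorem detReach_to_detReachReg {S : Type} {L : Set (ℕ → S)} (h : DetReachRecog L) :
    DetReachRegRecog L := by
  classical
  obtain ⟨d, Q, hQ, A, hC, hL⟩ := h
  set e : Q → ℕ := fun q => if A.acc q then 1 else 0 with he
  set r : ℕ := (4 - e A.init) % 3 with hrdef
  set A' : DetPA Q S (d + 1) ℕ :=
    { init := A.init
      trans := fun p a => (Fin.snoc (A.trans p a).1 (2 * e p + e (A.trans p a).2),
        (A.trans p a).2)
      acc := fun _ => True
      C := {w | (fun j => w j.castSucc) ∈ A.C ∧ w (Fin.last d) % 3 = r} } with hA'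
  have hrun : ∀ (α : ℕ → S) i, A'.run A.init α i = A.run A.init α i := by
    intro α i
    induction i with
    | zero => rfl
    | succ i ih =>
      show (A.trans (A'.run A.init α i) (α i)).2 = _
      rw [ih]
      rfl
  have hstate : ∀ (α : ℕ → S) i, A'.stateAt α i = A.stateAt α i := fun α i => hrun α i
  have hstep : ∀ (α : ℕ → S) i, A'.step α i =
      Fin.snoc (A.step α i) (2 * e (A.stateAt α i) + e (A.stateAt α (i + 1))) := by
    intro α i
    have h1 : A.stateAt α (i+1) = (A.trans (A.stateAt α i) (α i)).2 := rfl
    show Fin.snoc (α := fun _ => ℕ) (A.trans (A'.stateAt α i) (α i)).1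
      (2 * e (A'.stateAt α i) + e (A.trans (A'.stateAt α i) (α i)).2) = _
    rw [hstate, h1]
    rfl
  have hfront : ∀ (α : ℕ → S) i j, A'.vecSum α 0 i j.castSucc = A.vecSum α 0 i j := by
    intro α i j
    simp only [DetPA.vecSum, Finset.sum_apply]
    exact Finset.sum_congr rfl fun k _ => by rw [hstep]; simp [Fin.snoc_castSucc]
  have hlast : ∀ (α : ℕ → S) i, A'.vecSum α 0 i (Fin.last d) + e A.init =
      3 * (∑ j ∈ Finset.range i, e (A.stateAt α j)) + e (A.stateAt α i) := by
    intro α i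
    induction i with
    | zero => simp [DetPA.vecSum, DetPA.stateAt, DetPA.run]
    | succ i ih =>
      have hsum : A'.vecSum α 0 (i+1) = A'.vecSum α 0 i + A'.step α i :=
        Finset.sum_Ico_succ_top (Nat.zero_le _) _
      have := congrFun hsum (Fin.last d)
      simp only [Pi.add_apply] at this
      rw [this, hstep]
      simp only [Fin.snoc_last, Finset.sum_range_succ]
      omega
  have hkey : ∀ (α : ℕ → S) i, (A'.vecSum α 0 i (Fin.last d) % 3 = r) ↔ A.acc (A.stateAt α i) := by
    intro α i
    have h1 := hlast α i
    have h2 : e A.init = 0 ∨ e A.init = 1 := by by_cases h : A.acc A.init <;> simp [he, h]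
    have h3 : (e (A.stateAt α i) = 1 ∧ A.acc (A.stateAt α i)) ∨
        (e (A.stateAt α i) = 0 ∧ ¬ A.acc (A.stateAt α i)) := by
      by_cases h : A.acc (A.stateAt α i) <;> simp [he, h]
    rcases h3 with ⟨h3, h4⟩ | ⟨h3, h4⟩ <;> simp only [h4, iff_true, iff_false, not_iff_false_intro] <;>
      [skip; skip] <;> rcases h2 with h2 | h2 <;> rw [hrdef, h2] <;> omega
  refine ⟨d + 1, Q, hQ, A', semiLin_snoc_mod3 hC r (Nat.mod_lt _ (by norm_num)), ?_⟩
  rw [hL]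
  ext α
  simp only [Set.mem_setOf_eq, DetPA.ReachRegAccept, DetPA.ReachAccept, DetPA.InfAcc]
  constructor
  · rintro ⟨i, hi, hacc, hmem⟩
    refine ⟨⟨i, hi, trivial, ?_, ?_⟩, fun n => ⟨n, le_refl n, trivial⟩⟩
    · show (fun j => A'.vecSum α 0 i j.castSucc) ∈ A.C
      have : (fun j => A'.vecSum α 0 i j.castSucc) = A.vecSum α 0 i := funext (hfront α i)
      rw [this]; exact hmem
    · exact (hkey α i).mpr hacc
  · rintro ⟨⟨i, hi, -, hmem1, hmem2⟩, -⟩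
    refine ⟨i, hi, (hkey α i).mp hmem2, ?_⟩
    have : (fun j => A'.vecSum α 0 i j.castSucc) = A.vecSum α 0 i := funext (hfront α i)
    rw [← this]; exact hmem1
end Part1

section Part3
variable {Q S : Type} {d : ℕ} {M : Type}

lemma run_agree (A : DetPA Q S d M) (α β : ℕ → S) (i : ℕ)
    (h : ∀ j, j < i → α j = β j) : A.run A.init α i = A.run A.init β i := by
  induction i with
  | zero => rfl
  | succ i ih =>
    have hih := ih (fun j hj => h j (Nat.lt_succ_of_lt hj))
    simp [DetPA.run, hih, h i (Nat.lt_succ_self i)]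

lemma vecSum_agree (A : DetPA Q S d M) (α β : ℕ → S) (i : ℕ)
    (h : ∀ j, j < i → α j = β j) : A.vecSum α 0 i = A.vecSum β 0 i := by
  unfold DetPA.vecSum
  refine Finset.sum_congr rfl fun k hk => ?_
  have hk' : k < i := (Finset.mem_Ico.mp hk).2
  unfold DetPA.step DetPA.stateAt
  rw [run_agree A α β k (fun j hj => h j (hj.trans hk')), h k hk']

theorem not_detReach_Lanbnaw : ¬ DetReachRecog Lanbnaw := by
  rintro ⟨d, Q, hQ, A, hC, hL⟩
  set α : ℕ → Bool := fun i => if i < 1 then true else if i < 2 * 1 then false else true with hα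
  have hαL : α ∈ Lanbnaw := ⟨1, one_pos, fun i => rfl⟩
  rw [hL] at hαL
  obtain ⟨i, hi, hacc, hmem⟩ := hαL
  set β : ℕ → Bool := fun j => if j < i then α j else false with hβ
  have hagree : ∀ j, j < i → α j = β j := fun j hj => by simp [hβ, hj]
  have hβacc : A.ReachAccept β := by
    refine ⟨i, hi, ?_, ?_⟩
    · unfold DetPA.stateAt
      rw [← run_agree A α β i hagree]; exact hacc
    · rw [← vecSum_agree A α β i hagree]; exact hmem
  have hβL : β ∈ Lanbnaw := by rw [hL]; exact hβacc
  obtain ⟨n, hn, hpat⟩ := hβL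
  have h1 := hpat (max i (2 * n))
  have h2 : ¬ (max i (2 * n) < i) := by omega
  have h3 : ¬ (max i (2 * n) < n) := by omega
  have h4 : ¬ (max i (2 * n) < 2 * n) := by omega
  simp only [hβ, if_neg h2, if_neg h3, if_neg h4] at h1
  exact Bool.false_ne_true h1
end Part3

section Part2

/-- The 4-state automaton for `{aⁿbⁿa^ω}`: 0 = reading a's, 1 = reading b's,
2 = reading trailing a's (accepting), 3 = dead. -/
def A2 : DetPA (Fin 4) Bool 2 ℕ where
  init := 0
  trans := fun p a =>
    if p = 0 then (if a then (![1, 0], 0) else (![0, 1], 1))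
    else if p = 1 then (if a then (![0, 0], 2) else (![0, 1], 1))
    else if p = 2 then (if a then (![0, 0], 2) else (![0, 0], 3))
    else (![0, 0], 3)
  acc := fun q => q = 2
  C := {v | v 1 = v 0 ∧ 1 ≤ v 0}

example : (A2.trans 0 true).2 = 0 := rfl
example : (A2.trans 1 false).1 = ![0,1] := rfl
example : A2.stateAt (fun _ => true) 1 = 0 := rfl

lemma A2C_semilin : SemiLin A2.C := by
  refine ⟨1, fun _ => fun _ => 1, fun _ => {fun _ => 1}, ?_⟩
  ext v
  simp only [Set.mem_iUnion, LinSet, Set.mem_setOf_eq, Finset.sum_singleton]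
  constructor
  · rintro ⟨hvv, hv1⟩
    refine ⟨0, fun _ => v 0 - 1, ?_⟩
    funext j
    simp only [Pi.add_apply, Pi.smul_apply, smul_eq_mul, mul_one]
    fin_cases j <;> · simp; omega
  · rintro ⟨-, z, hz⟩
    have h0 := congrFun hz 0
    have h1 := congrFun hz 1
    simp only [Pi.add_apply, Pi.smul_apply, smul_eq_mul, mul_one] at h0 h1
    exact ⟨by rw [h0, h1], by rw [h0]; omega⟩
end Part2

section Part2b
variable {α : ℕ → Bool} {n : ℕ}

lemma A2_state_pattern (hn : 0 < n)
    (hα : ∀ i, α i = if i < n then true else if i < 2 * n then false else true) :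
    ∀ i, A2.stateAt α i = if i ≤ n then 0 else if i ≤ 2 * n then 1 else 2 := by
  intro i
  induction i with
  | zero => rw [if_pos (Nat.zero_le n)]; rfl
  | succ i ih =>
    have hstep : A2.stateAt α (i + 1) = (A2.trans (A2.stateAt α i) (α i)).2 := rfl
    rcases Nat.lt_or_ge i n with h1 | h1
    · have h5 : A2.stateAt α i = 0 := by rw [ih, if_pos (Nat.le_of_lt h1)]
      have h6 : α i = true := by rw [hα i, if_pos h1]
      rw [hstep, h5, h6, if_pos (by omega : i + 1 ≤ n)]
      rfl
    · rcases Nat.lt_or_ge i (2 * n) with h2 | h2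
      · have h6 : α i = false := by rw [hα i, if_neg (by omega), if_pos h2]
        have h5 : A2.stateAt α i = 0 ∨ A2.stateAt α i = 1 := by
          rw [ih]
          rcases Nat.eq_or_lt_of_le h1 with h3 | h3
          · left; rw [if_pos (by omega : i ≤ n)]
          · right; rw [if_neg (by omega : ¬ i ≤ n), if_pos (by omega : i ≤ 2 * n)]
        rw [if_neg (by omega : ¬ i + 1 ≤ n), if_pos (by omega : i + 1 ≤ 2 * n)]
        rcases h5 with h5 | h5 <;> rw [hstep, h5, h6] <;> rfl
      · have h6 : α i = true := by rw [hα i, if_neg (by omega), if_neg (by omega)]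
        have h5 : A2.stateAt α i = 1 ∨ A2.stateAt α i = 2 := by
          rw [ih, if_neg (by omega : ¬ i ≤ n)]
          rcases Nat.eq_or_lt_of_le h2 with h3 | h3
          · left; rw [if_pos (by omega : i ≤ 2 * n)]
          · right; rw [if_neg (by omega : ¬ i ≤ 2 * n)]
        rw [if_neg (by omega : ¬ i + 1 ≤ n), if_neg (by omega : ¬ i + 1 ≤ 2 * n)]
        rcases h5 with h5 | h5 <;> rw [hstep, h5, h6] <;> rfl

lemma A2_step_pattern (hn : 0 < n)
    (hα : ∀ i, α i = if i < n then true else if i < 2 * n then false else true) :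
    ∀ i, A2.step α i = ![if i < n then 1 else 0, if n ≤ i ∧ i < 2 * n then 1 else 0] := by
  intro i
  have hs := A2_state_pattern hn hα i
  have hu : A2.step α i = (A2.trans (A2.stateAt α i) (α i)).1 := rfl
  rcases Nat.lt_or_ge i n with h1 | h1
  · have h5 : A2.stateAt α i = 0 := by rw [hs, if_pos (Nat.le_of_lt h1)]
    have h6 : α i = true := by rw [hα i, if_pos h1]
    rw [hu, h5, h6, if_pos h1, if_neg (by omega : ¬ (n ≤ i ∧ i < 2 * n))]
    rfl
  · rcases Nat.lt_or_ge i (2 * n) with h2 | h2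
    · have h6 : α i = false := by rw [hα i, if_neg (by omega), if_pos h2]
      have h5 : A2.stateAt α i = 0 ∨ A2.stateAt α i = 1 := by
        rw [hs]
        rcases Nat.eq_or_lt_of_le h1 with h3 | h3
        · left; rw [if_pos (by omega : i ≤ n)]
        · right; rw [if_neg (by omega : ¬ i ≤ n), if_pos (by omega : i ≤ 2 * n)]
      rw [if_neg (by omega : ¬ i < n), if_pos (by omega : n ≤ i ∧ i < 2 * n)]
      rcases h5 with h5 | h5 <;> rw [hu, h5, h6] <;> rfl
    · have h6 : α i = true := by rw [hα i, if_neg (by omega), if_neg (by omega)]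
      have h5 : A2.stateAt α i = 1 ∨ A2.stateAt α i = 2 := by
        rw [hs, if_neg (by omega : ¬ i ≤ n)]
        rcases Nat.eq_or_lt_of_le h2 with h3 | h3
        · left; rw [if_pos (by omega : i ≤ 2 * n)]
        · right; rw [if_neg (by omega : ¬ i ≤ 2 * n)]
      rw [if_neg (by omega : ¬ i < n), if_neg (by omega : ¬ (n ≤ i ∧ i < 2 * n))]
      rcases h5 with h5 | h5 <;> rw [hu, h5, h6] <;> rfl

lemma A2_vecSum_pattern (hn : 0 < n)
    (hα : ∀ i, α i = if i < n then true else if i < 2 * n then false else true) :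
    ∀ i, A2.vecSum α 0 i = ![min i n, min n (i - n)] := by
  intro i
  induction i with
  | zero => funext j; fin_cases j <;> simp [DetPA.vecSum]
  | succ i ih =>
    have hsum : A2.vecSum α 0 (i + 1) = A2.vecSum α 0 i + A2.step α i :=
      Finset.sum_Ico_succ_top (Nat.zero_le _) _
    rw [hsum, ih, A2_step_pattern hn hα i]
    funext j
    fin_cases j <;> simp <;> split_ifs <;> omega
end Part2b

section Part2c

lemma A2_inv (α : ℕ → Bool) : ∀ i,
    (A2.stateAt α i = 0 ∧ (∀ j, j < i → α j = true) ∧ A2.vecSum α 0 i = ![i, 0]) ∨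
    (∃ x y, A2.stateAt α i = 1 ∧ i = x + y ∧ 1 ≤ y ∧ (∀ j, j < x → α j = true) ∧
      (∀ j, x ≤ j → j < i → α j = false) ∧ A2.vecSum α 0 i = ![x, y]) ∨
    (∃ x y, A2.stateAt α i = 2 ∧ x + y < i ∧ 1 ≤ y ∧ (∀ j, j < x → α j = true) ∧
      (∀ j, x ≤ j → j < x + y → α j = false) ∧ (∀ j, x + y ≤ j → j < i → α j = true) ∧
      A2.vecSum α 0 i = ![x, y]) ∨
    A2.stateAt α i = 3 := by
  intro i
  induction i with
  | zero =>
    left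
    refine ⟨rfl, fun j hj => absurd hj (Nat.not_lt_zero j), ?_⟩
    funext j; fin_cases j <;> simp [DetPA.vecSum]
  | succ i ih =>
    have hstep : A2.stateAt α (i + 1) = (A2.trans (A2.stateAt α i) (α i)).2 := rfl
    have hsum : A2.vecSum α 0 (i + 1) = A2.vecSum α 0 i + A2.step α i :=
      Finset.sum_Ico_succ_top (Nat.zero_le _) _
    have hu : A2.step α i = (A2.trans (A2.stateAt α i) (α i)).1 := rfl
    rcases ih with ⟨hs, htr, hv⟩ | ⟨x, y, hs, hxy, hy, htr, hfa, hv⟩ |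
        ⟨x, y, hs, hxy, hy, htr, hfa, htr2, hv⟩ | hs
    · cases hb : α i with
      | true =>
        left
        refine ⟨by rw [hstep, hs, hb]; rfl, ?_, ?_⟩
        · intro j hj
          rcases Nat.lt_or_ge j i with h | h
          · exact htr j h
          · have : j = i := by omega
            rw [this, hb]
        · rw [hsum, hv, hu, hs, hb]
          show ![i, 0] + ![1, 0] = _
          funext j; fin_cases j <;> simp
      | false =>
        right; left
        refine ⟨i, 1, by rw [hstep, hs, hb]; rfl, by omega, le_refl 1, htr, ?_, ?_⟩
        · intro j h1 h2
          have : j = i := by omega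
          rw [this, hb]
        · rw [hsum, hv, hu, hs, hb]
          show ![i, 0] + ![0, 1] = _
          funext j; fin_cases j <;> simp
    · cases hb : α i with
      | true =>
        right; right; left
        refine ⟨x, y, by rw [hstep, hs, hb]; rfl, by omega, hy, htr, fun j h1 h2 => hfa j h1 (by omega), ?_, ?_⟩
        · intro j h1 h2
          have : j = i := by omega
          rw [this, hb]
        · rw [hsum, hv, hu, hs, hb]
          show ![x, y] + ![0, 0] = _
          funext j; fin_cases j <;> simp
      | false =>
        right; left
        refine ⟨x, y + 1, by rw [hstep, hs, hb]; rfl, by omega, by omega, htr, ?_, ?_⟩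
        · intro j h1 h2
          rcases Nat.lt_or_ge j i with h | h
          · exact hfa j h1 h
          · have : j = i := by omega
            rw [this, hb]
        · rw [hsum, hv, hu, hs, hb]
          show ![x, y] + ![0, 1] = _
          funext j; fin_cases j <;> simp
    · cases hb : α i with
      | true =>
        right; right; left
        refine ⟨x, y, by rw [hstep, hs, hb]; rfl, by omega, hy, htr, hfa, ?_, ?_⟩
        · intro j h1 h2
          rcases Nat.lt_or_ge j i with h | h
          · exact htr2 j h1 h
          · have : j = i := by omega
            rw [this, hb]
        · rw [hsum, hv, hu, hs, hb]
          show ![x, y] + ![0, 0] = _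
          funext j; fin_cases j <;> simp
      | false =>
        right; right; right
        rw [hstep, hs, hb]; rfl
    · right; right; right
      cases hb : α i <;> rw [hstep, hs, hb] <;> rfl

lemma A2_dead_absorb (α : ℕ → Bool) (k : ℕ) (hk : A2.stateAt α k = 3) :
    ∀ m, k ≤ m → A2.stateAt α m = 3 := by
  intro m hm
  obtain ⟨t, rfl⟩ := Nat.exists_eq_add_of_le hm
  induction t with
  | zero => exact hk
  | succ t ih =>
    have hstep : A2.stateAt α (k + t + 1) = (A2.trans (A2.stateAt α (k + t)) (α (k + t))).2 := rfl
    rw [show k + (t+1) = k + t + 1 by omega, hstep, ih (by omega)]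
    cases α (k + t) <;> rfl

lemma A2_two_absorb (α : ℕ → Bool) (hno3 : ∀ m, A2.stateAt α m ≠ 3) (k : ℕ)
    (hk : A2.stateAt α k = 2) : ∀ m, k ≤ m → A2.stateAt α m = 2 ∧ α m = true := by
  have hone : ∀ m, A2.stateAt α m = 2 → A2.stateAt α (m+1) = 2 ∧ α m = true := by
    intro m hm
    have hstep : A2.stateAt α (m + 1) = (A2.trans (A2.stateAt α m) (α m)).2 := rfl
    cases hb : α m with
    | true => exact ⟨by rw [hstep, hm, hb]; rfl, rfl⟩
    | false =>
      exfalso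
      exact hno3 (m+1) (by rw [hstep, hm, hb]; rfl)
  intro m hm
  obtain ⟨t, rfl⟩ := Nat.exists_eq_add_of_le hm
  induction t with
  | zero => exact ⟨hk, (hone k hk).2⟩
  | succ t ih =>
    have h2 := (hone (k+t) (ih (by omega)).1).1
    rw [show k + (t+1) = k + t + 1 by omega] at *
    exact ⟨h2, (hone (k+t+1) h2).2⟩

theorem detReachReg_Lanbnaw : DetReachRegRecog Lanbnaw := by
  refine ⟨2, Fin 4, inferInstance, A2, A2C_semilin, ?_⟩
  ext α
  simp only [Set.mem_setOf_eq, Lanbnaw, DetPA.ReachRegAccept, DetPA.ReachAccept, DetPA.InfAcc]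
  constructor
  · rintro ⟨n, hn, hα⟩
    constructor
    · refine ⟨2 * n + 1, by omega, ?_, ?_⟩
      · show A2.stateAt α (2*n+1) = 2
        rw [A2_state_pattern hn hα, if_neg (by omega), if_neg (by omega)]
      · rw [A2_vecSum_pattern hn hα]
        show (![min (2*n+1) n, min n (2*n+1-n)] : Fin 2 → ℕ) 1 = _ ∧ _
        simp only [Matrix.cons_val_zero, Matrix.cons_val_one, Matrix.head_cons]
        omega
    · intro m
      refine ⟨max m (2*n+1), le_max_left _ _, ?_⟩
      show A2.stateAt α (max m (2*n+1)) = 2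
      rw [A2_state_pattern hn hα, if_neg (by omega), if_neg (by omega)]
  · rintro ⟨⟨i, hi, hacc, hmem⟩, hinf⟩
    have hno3 : ∀ m, A2.stateAt α m ≠ 3 := by
      intro m hm
      obtain ⟨k, hk1, hk2⟩ := hinf (m + 1)
      have := A2_dead_absorb α m hm k (by omega)
      rw [this] at hk2
      exact (by decide : ¬ (3 : Fin 4) = 2) hk2
    have hs2 : A2.stateAt α i = 2 := hacc
    rcases A2_inv α i with ⟨hs, -, -⟩ | ⟨x, y, hs, -⟩ | ⟨x, y, hs, hxy, hy, htr, hfa, htr2, hv⟩ | hs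
    · rw [hs] at hs2; exact absurd hs2 (by decide)
    · rw [hs] at hs2; exact absurd hs2 (by decide)
    · rw [hv] at hmem
      obtain ⟨hyx, hx1⟩ := hmem
      simp only [Matrix.cons_val_zero, Matrix.cons_val_one, Matrix.head_cons] at hyx hx1
      have habs := A2_two_absorb α hno3 i hs2
      refine ⟨x, by omega, ?_⟩
      intro j
      rcases Nat.lt_or_ge j x with h1 | h1
      · rw [if_pos h1]; exact htr j h1
      · rw [if_neg (by omega : ¬ j < x)]
        rcases Nat.lt_or_ge j (2 * x) with h2 | h2
        · rw [if_pos h2]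
          exact hfa j h1 (by omega)
        · rw [if_neg (by omega : ¬ j < 2 * x)]
          rcases Nat.lt_or_ge j i with h3 | h3
          · exact htr2 j (by omega) h3
          · exact (habs j h3).2
    · rw [hs] at hs2; exact absurd hs2 (by decide)
end Part2c

/-- deterministic reachability PA ⊊ deterministic reachability-regular PA,
with strictness witnessed by `{aⁿbⁿa^ω | n > 0}`. -/
theorem detReach_subset_detReachReg_strict :
    (∀ (S : Type) (L : Set (ℕ → S)), DetReachRecog L → DetReachRegRecog L) ∧
    DetReachRegRecog Lanbnaw ∧ ¬ DetReachRecog Lanbnaw := by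
  exact ⟨fun _ _ h => detReach_to_detReachReg h, detReachReg_Lanbnaw, not_detReach_Lanbnaw⟩
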